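/- Let f be a holomorphic self-map of the Euclidean unit ball B_d into the closed unit disk given by the realization f(z) = A + B(I - Σ_j z_j D_j)^{-1}(Σ_j z_j C_j), where the colligation V = [[A,B],[C,D]] : C ⊕ H → C ⊕ (H ⊗ C^d) is unitary. If λ ∈ B_d satisfies f(λ) = 0, then λ is a row eigenvalue of the row operator D* = [D_1* … D_d*] : H ⊗ C^d → H, with row eigenvector v^λ := C + D L(λ), where L(λ) := (I - Σ_j λ_j D_j)^{-1}(Σ_j λ_j C_j). -/

import Mathlib

open ContinuousLinearMap

/-- Unit-ball realization: if `f(λ) = 0` for `λ ∈ B_d`, then `λ` is a row eigenvalue of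
`D* = [D_1* … D_d*]`, with row eigenvector `v^λ = C + D L(λ)` where
`L(λ) = (I - Σ λ_j D_j)⁻¹ (Σ λ_j C_j 1)`. -/
theorem stmt4 {H : Type*} [NormedAddCommGroup H] [InnerProductSpace ℂ H] [CompleteSpace H]
    {d : ℕ} (A : ℂ) (B : H →L[ℂ] ℂ) (C : Fin d → (ℂ →L[ℂ] H)) (D : Fin d → (H →L[ℂ] H))
    -- V*V = I on ℂ ⊕ H
    (h1 : star A * A + ∑ j, adjoint (C j) (C j 1) = 1)
    (h2 : ∀ h : H, star A * B h + ∑ j, adjoint (C j) (D j h) = 0)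
    (h3 : adjoint B A + ∑ j, adjoint (D j) (C j 1) = 0)
    (h4 : ∀ h : H, adjoint B (B h) + ∑ j, adjoint (D j) (D j h) = h)
    -- V V* = I on ℂ ⊕ (H ⊗ ℂ^d)
    (h5 : A * star A + B (adjoint B 1) = 1)
    (h6 : ∀ v : Fin d → H, A * ∑ j, adjoint (C j) (v j) + B (∑ j, adjoint (D j) (v j)) = 0)
    (h7 : ∀ k, C k (star A) + D k (adjoint B 1) = 0)
    (h8 : ∀ (v : Fin d → H) (k : Fin d),
      C k (∑ j, adjoint (C j) (v j)) + D k (∑ j, adjoint (D j) (v j)) = v k)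
    (f : (Fin d → ℂ) → ℂ)
    (hf : ∀ z : Fin d → ℂ,
      f z = A + B (Ring.inverse (1 - ∑ j, z j • D j) (∑ j, z j • C j 1)))
    (lam : Fin d → ℂ) (hlam : ∑ j, ‖lam j‖ ^ 2 < 1) (hzero : f lam = 0) :
    (fun j => C j 1 + D j (Ring.inverse (1 - ∑ i, lam i • D i) (∑ i, lam i • C i 1))) ≠ 0 ∧
      ∑ j, adjoint (D j)
          (C j 1 + D j (Ring.inverse (1 - ∑ i, lam i • D i) (∑ i, lam i • C i 1)))
        = ∑ j, lam j •
          (C j 1 + D j (Ring.inverse (1 - ∑ i, lam i • D i) (∑ i, lam i • C i 1))) := by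
  set L : H := Ring.inverse (1 - ∑ i, lam i • D i) (∑ i, lam i • C i 1) with hLdef
  -- contraction estimate from h4
  have hDnorm : ∀ h : H, ∑ j, ‖D j h‖ ^ 2 ≤ ‖h‖ ^ 2 := by
    intro h
    have key := congrArg (fun x : H => (inner ℂ x h : ℂ)) (h4 h)
    simp only [inner_add_left, sum_inner, adjoint_inner_left,
      inner_self_eq_norm_sq_to_K] at key
    have key' : ‖B h‖ ^ 2 + ∑ x, ‖(D x) h‖ ^ 2 = ‖h‖ ^ 2 := by exact_mod_cast key
    have hb : (0:ℝ) ≤ ‖B h‖ ^ 2 := by positivity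
    linarith
  have hsum0 : (0:ℝ) ≤ ∑ j, ‖lam j‖ ^ 2 :=
    Finset.sum_nonneg fun j _ => by positivity
  have hs : Real.sqrt (∑ j, ‖lam j‖ ^ 2) < 1 := by
    rw [show (1:ℝ) = Real.sqrt 1 by simp]
    exact Real.sqrt_lt_sqrt hsum0 (by simpa using hlam)
  have hTnorm : ‖∑ j, lam j • D j‖ < 1 := by
    refine lt_of_le_of_lt (opNorm_le_bound _ (Real.sqrt_nonneg _) ?_) hs
    intro h
    have hle : ‖(∑ j, lam j • D j) h‖ ≤ ∑ j, ‖lam j‖ * ‖D j h‖ := by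
      rw [ContinuousLinearMap.sum_apply]
      refine (norm_sum_le _ _).trans ?_
      refine Finset.sum_le_sum fun j _ => ?_
      simp [norm_smul]
    refine hle.trans ?_
    have hcs := Finset.sum_mul_sq_le_sq_mul_sq Finset.univ
      (fun j => ‖lam j‖) (fun j => ‖D j h‖)
    have hsq : (∑ j, ‖lam j‖ * ‖D j h‖) ^ 2
        ≤ (∑ j, ‖lam j‖ ^ 2) * ‖h‖ ^ 2 := by
      refine hcs.trans ?_
      exact mul_le_mul_of_nonneg_left (hDnorm h) hsum0
    have ha : (0:ℝ) ≤ ∑ j, ‖lam j‖ * ‖D j h‖ :=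
      Finset.sum_nonneg fun j _ => by positivity
    have hb : (0:ℝ) ≤ Real.sqrt (∑ j, ‖lam j‖ ^ 2) * ‖h‖ := by positivity
    have hsq' : (Real.sqrt (∑ j, ‖lam j‖ ^ 2) * ‖h‖) ^ 2
        = (∑ j, ‖lam j‖ ^ 2) * ‖h‖ ^ 2 := by
      rw [mul_pow, Real.sq_sqrt hsum0]
    nlinarith
  have hunit : IsUnit (1 - ∑ j, lam j • D j) :=
    isUnit_one_sub_of_norm_lt_one hTnorm
  have hTL : (1 - ∑ j, lam j • D j) L = ∑ j, lam j • C j 1 := by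
    have h := Ring.mul_inverse_cancel _ hunit
    calc (1 - ∑ j, lam j • D j) L
        = ((1 - ∑ j, lam j • D j) * Ring.inverse (1 - ∑ j, lam j • D j))
            (∑ i, lam i • C i 1) := rfl
      _ = ∑ i, lam i • C i 1 := by rw [h]; rfl
  have hLe : L = ∑ j, lam j • (C j 1 + D j L) := by
    have h' : L - ∑ j, lam j • D j L = ∑ j, lam j • C j 1 := by
      have h'' := hTL
      rw [ContinuousLinearMap.sub_apply, ContinuousLinearMap.one_apply,
        ContinuousLinearMap.sum_apply] at h''
      simp only [ContinuousLinearMap.smul_apply] at h''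
      exact h''
    have expand : ∑ j, lam j • (C j 1 + D j L)
        = (∑ j, lam j • C j 1) + ∑ j, lam j • D j L := by
      simp only [smul_add, Finset.sum_add_distrib]
    rw [expand, ← h']
    abel
  have hfL : A + B L = 0 := by
    have := hf lam
    rw [hzero] at this
    rw [← hLdef] at this
    linear_combination -this
  have hBL : B L = -A := by linear_combination hfL
  constructor
  · intro hv
    have hv' : ∀ j, C j 1 + D j L = 0 := fun j => congrFun hv j
    have hL0 : L = 0 := by
      rw [hLe]
      simp [hv']
    have hC0 : ∀ j, C j 1 = 0 := by
      intro j
      have := hv' j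
      rw [hL0] at this
      simpa using this
    have hA0 : A = 0 := by
      have := hfL
      rw [hL0] at this
      simpa using this
    rw [hA0] at h1
    simp [hC0] at h1
  · have step : ∑ j, adjoint (D j) (C j 1 + D j L)
        = (∑ j, adjoint (D j) (C j 1)) + ∑ j, adjoint (D j) (D j L) := by
      rw [← Finset.sum_add_distrib]
      simp
    rw [step]
    have e1 : ∑ j, adjoint (D j) (C j 1) = -(adjoint B A) := by
      linear_combination (norm := module) h3
    have e2 : ∑ j, adjoint (D j) (D j L) = L - adjoint B (B L) := by
      linear_combination (norm := module) h4 L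
    rw [e1, e2, hBL, ← hLe]
    simp
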